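/- Let G be a finite simple graph with surplus(G) ≥ 2, let O(G), I(G), P(G) be the parts of its Gallai-Edmonds decomposition, and suppose I(G) ∪ P(G) is an independent set in G. Let o, v ∈ O(G) be adjacent vertices, let G' = G − {o}, and let O(G'), I(G'), P(G') be the parts of the Gallai-Edmonds decomposition of G'. Then the induced subgraph of G' on P(G') contains at least one edge. -/

import Mathlib

open scoped Classical

/-- A fractional vertex cover of `G`. -/
def IsFVC {V : Type} (G : SimpleGraph V) (x : V → ℝ) : Prop :=
  (∀ v, 0 ≤ x v ∧ x v ≤ 1) ∧ ∀ ⦃u v⦄, G.Adj u v → 1 ≤ x u + x v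

/-- The weight of a fractional vertex cover. -/
noncomputable def fvcWeight {V : Type} [Fintype V] (x : V → ℝ) : ℝ := ∑ v, x v

/-- `LP(G)`: the minimum weight of a fractional vertex cover of `G`. -/
noncomputable def LPopt {V : Type} [Fintype V] (G : SimpleGraph V) : ℝ :=
  sInf {w : ℝ | ∃ x : V → ℝ, IsFVC G x ∧ w = fvcWeight x}

/-- A matching of `G`: a set of pairwise vertex-disjoint edges of `G`. -/
def IsMatchingSet {V : Type} (G : SimpleGraph V) (M : Finset (Sym2 V)) : Prop :=
  (∀ e ∈ M, e ∈ G.edgeSet) ∧ ∀ e ∈ M, ∀ f ∈ M, e ≠ f → ∀ v : V, v ∈ e → v ∉ f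

/-- `MM(G)`: the maximum size of a matching of `G`. -/
noncomputable def MMnum {V : Type} (G : SimpleGraph V) : ℕ :=
  sSup {n : ℕ | ∃ M : Finset (Sym2 V), IsMatchingSet G M ∧ M.card = n}

/-- `OPT(G)`: the minimum size of a vertex cover of `G`. -/
noncomputable def VCnum {V : Type} (G : SimpleGraph V) : ℕ :=
  sInf {n : ℕ | ∃ S : Finset V, (∀ ⦃u v⦄, G.Adj u v → u ∈ S ∨ v ∈ S) ∧ S.card = n}

/-- `N(X)`: the set of vertices outside `X` having a neighbour in `X`. -/
def nbhd {V : Type} (G : SimpleGraph V) (X : Set V) : Set V :=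
  {v | v ∉ X ∧ ∃ u ∈ X, G.Adj u v}

/-- `X` is an independent set in `G`. -/
def IndepSet {V : Type} (G : SimpleGraph V) (X : Set V) : Prop :=
  ∀ u ∈ X, ∀ v ∈ X, ¬ G.Adj u v

/-- `surplus(G) ≥ s`: every nonempty independent set `X` satisfies `|N(X)| ≥ |X| + s`. -/
def SurplusGE {V : Type} (G : SimpleGraph V) (s : ℕ) : Prop :=
  ∀ X : Set V, X.Nonempty → IndepSet G X → X.ncard + s ≤ (nbhd G X).ncard

/-- The matching `M` saturates the vertex `v`. -/
def Saturates {V : Type} (M : Finset (Sym2 V)) (v : V) : Prop := ∃ e ∈ M, v ∈ e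

/-- `O(G)`: vertices left unsaturated by some maximum matching of `G`. -/
def OSet {V : Type} (G : SimpleGraph V) : Set V :=
  {v | ∃ M : Finset (Sym2 V), IsMatchingSet G M ∧ M.card = MMnum G ∧ ¬ Saturates M v}

/-- `I(G)`: vertices outside `O(G)` having a neighbour in `O(G)`. -/
def ISet {V : Type} (G : SimpleGraph V) : Set V := nbhd G (OSet G)

/-- `P(G)`: the remaining vertices. -/
def GEPSet {V : Type} (G : SimpleGraph V) : Set V := (OSet G ∪ ISet G)ᶜ


set_option linter.unusedSectionVars false

section GEaux

variable {V : Type} [Fintype V] {G : SimpleGraph V}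

lemma GEaux.not_sat_iff {M : Finset (Sym2 V)} {v : V} :
    ¬ Saturates M v ↔ ∀ e ∈ M, v ∉ e := by
  simp [Saturates]

lemma GEaux.mmnum_spec (G : SimpleGraph V) :
    (∃ M : Finset (Sym2 V), IsMatchingSet G M ∧ M.card = MMnum G) ∧
    (∀ M : Finset (Sym2 V), IsMatchingSet G M → M.card ≤ MMnum G) := by
  have hbdd : BddAbove {n : ℕ | ∃ M : Finset (Sym2 V), IsMatchingSet G M ∧ M.card = n} := by
    refine ⟨Fintype.card (Sym2 V), ?_⟩
    rintro n ⟨M, _, rfl⟩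
    simpa using Finset.card_le_univ M
  have hne : {n : ℕ | ∃ M : Finset (Sym2 V), IsMatchingSet G M ∧ M.card = n}.Nonempty :=
    ⟨0, ∅, ⟨by simp, by simp⟩, by simp⟩
  constructor
  · have := Nat.sSup_mem hne hbdd
    simpa [MMnum] using this
  · intro M hM
    exact le_csSup hbdd ⟨M, hM, rfl⟩

lemma GEaux.partner_unique {M : Finset (Sym2 V)} (hM : IsMatchingSet G M) {v w w' : V}
    (h1 : s(v,w) ∈ M) (h2 : s(v,w') ∈ M) : w = w' := by
  by_contra hne
  have hne2 : s(v,w) ≠ s(v,w') := fun h => hne (Sym2.congr_right.mp h)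
  exact hM.2 _ h1 _ h2 hne2 v (by simp) (by simp)

lemma GEaux.exists_partner {M : Finset (Sym2 V)} (hM : IsMatchingSet G M) {v : V}
    (h : Saturates M v) : ∃ w, w ≠ v ∧ s(v,w) ∈ M := by
  obtain ⟨e, heM, hve⟩ := h
  obtain ⟨w, rfl⟩ := Sym2.mem_iff_exists.mp hve
  refine ⟨w, ?_, heM⟩
  have := hM.1 _ heM
  rw [SimpleGraph.mem_edgeSet] at this
  exact this.ne'

lemma GEaux.no_augment {M : Finset (Sym2 V)} (hM : IsMatchingSet G M)
    (hc : M.card = MMnum G) {a b : V} (hab : G.Adj a b)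
    (ha : ¬ Saturates M a) (hb : ¬ Saturates M b) : False := by
  have hnotmem : s(a,b) ∉ M := fun h => ha ⟨_, h, by simp⟩
  have hM' : IsMatchingSet G (insert s(a,b) M) := by
    constructor
    · intro e he
      rcases Finset.mem_insert.mp he with rfl | he
      · exact G.mem_edgeSet.mpr hab
      · exact hM.1 e he
    · intro e he f hf hef u hu
      rcases Finset.mem_insert.mp he with rfl | heM
      · rcases Finset.mem_insert.mp hf with rfl | hfM
        · exact absurd rfl hef
        · rcases Sym2.mem_iff.mp hu with rfl | rfl
          · exact fun hvf => ha ⟨f, hfM, hvf⟩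
          · exact fun hvf => hb ⟨f, hfM, hvf⟩
      · rcases Finset.mem_insert.mp hf with rfl | hfM
        · intro hvf
          rcases Sym2.mem_iff.mp hvf with rfl | rfl
          · exact ha ⟨e, heM, hu⟩
          · exact hb ⟨e, heM, hu⟩
        · exact hM.2 e heM f hfM hef u hu
  have := (GEaux.mmnum_spec G).2 _ hM'
  rw [Finset.card_insert_of_notMem hnotmem, hc] at this
  omega

lemma GEaux.swap {M : Finset (Sym2 V)} (hM : IsMatchingSet G M) {x y z : V}
    (hxy : G.Adj x y) (hx : ¬ Saturates M x) (hyz : s(y,z) ∈ M) :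
    IsMatchingSet G (insert s(x,y) (M.erase s(y,z))) ∧
    (insert s(x,y) (M.erase s(y,z))).card = M.card ∧
    ¬ Saturates (insert s(x,y) (M.erase s(y,z))) z ∧
    ∀ v, ¬ Saturates M v → v ≠ x → ¬ Saturates (insert s(x,y) (M.erase s(y,z))) v := by
  have hxnotin : ∀ e ∈ M, x ∉ e := GEaux.not_sat_iff.mp hx
  have hzy : z ≠ y := by
    have := hM.1 _ hyz
    rw [SimpleGraph.mem_edgeSet] at this
    exact this.ne'
  have hzx : z ≠ x := by
    rintro rfl
    exact hx ⟨_, hyz, by simp⟩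
  have hyx : y ≠ x := hxy.ne'
  have hxy_notin : s(x,y) ∉ M.erase s(y,z) := by
    intro h
    exact hxnotin _ (Finset.mem_of_mem_erase h) (by simp)
  have hynotin : ∀ e ∈ M.erase s(y,z), y ∉ e := by
    intro e he
    exact hM.2 _ hyz _ (Finset.mem_of_mem_erase he) (Ne.symm (Finset.ne_of_mem_erase he)) y (by simp)
  refine ⟨⟨?_, ?_⟩, ?_, ?_, ?_⟩
  · intro e he
    rcases Finset.mem_insert.mp he with rfl | he
    · exact G.mem_edgeSet.mpr hxy
    · exact hM.1 e (Finset.mem_of_mem_erase he)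
  · intro e he f hf hef u hu
    rcases Finset.mem_insert.mp he with rfl | heM
    · rcases Finset.mem_insert.mp hf with rfl | hfM
      · exact absurd rfl hef
      · rcases Sym2.mem_iff.mp hu with rfl | rfl
        · exact fun h => hxnotin _ (Finset.mem_of_mem_erase hfM) h
        · exact fun h => hynotin _ hfM h
    · rcases Finset.mem_insert.mp hf with rfl | hfM
      · intro huf
        rcases Sym2.mem_iff.mp huf with rfl | rfl
        · exact hxnotin _ (Finset.mem_of_mem_erase heM) hu
        · exact hynotin _ heM hu
      · exact hM.2 e (Finset.mem_of_mem_erase heM) f (Finset.mem_of_mem_erase hfM) hef u hu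
  · rw [Finset.card_insert_of_notMem hxy_notin, Finset.card_erase_of_mem hyz]
    have : 0 < M.card := Finset.card_pos.mpr ⟨_, hyz⟩
    omega
  · rintro ⟨e, he, hze⟩
    rcases Finset.mem_insert.mp he with rfl | he
    · rcases Sym2.mem_iff.mp hze with rfl | rfl
      · exact hzx rfl
      · exact hzy rfl
    · exact hM.2 _ hyz _ (Finset.mem_of_mem_erase he) (Ne.symm (Finset.ne_of_mem_erase he)) z
        (by simp) hze
  · rintro v hv hvx ⟨e, he, hve⟩
    rcases Finset.mem_insert.mp he with rfl | he
    · rcases Sym2.mem_iff.mp hve with rfl | rfl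
      · exact hvx rfl
      · exact hv ⟨_, hyz, by simp⟩
    · exact hv ⟨e, Finset.mem_of_mem_erase he, hve⟩

lemma GEaux.exchange (k : ℕ) : ∀ (M N : Finset (Sym2 V)) (b : V),
    IsMatchingSet G M → M.card = MMnum G → IsMatchingSet G N → N.card = MMnum G →
    ¬ Saturates M b → Saturates N b → MMnum G ≤ (M ∩ N).card + k →
    ∃ y, Saturates M y ∧ ¬ Saturates N y ∧
      (∃ M', IsMatchingSet G M' ∧ M'.card = MMnum G ∧ ¬ Saturates M' y ∧
        ∀ v, ¬ Saturates M v → v ≠ b → ¬ Saturates M' v) ∧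
      (∃ N', IsMatchingSet G N' ∧ N'.card = MMnum G ∧
        (∀ v, ¬ Saturates N v → v ≠ y → ¬ Saturates N' v) ∧
        (M ∩ N).card < (M ∩ N').card) := by
  induction k with
  | zero =>
    intro M N b hM hMc hN hNc hbM hbN hk
    exfalso
    have h1 : (M ∩ N).card ≤ N.card := Finset.card_le_card Finset.inter_subset_right
    have h2 : M ∩ N = N := Finset.eq_of_subset_of_card_le Finset.inter_subset_right (by omega)
    obtain ⟨e, heN, hbe⟩ := hbN
    have heMN : e ∈ M ∩ N := by rw [h2]; exact heN
    have heM : e ∈ M := (Finset.mem_inter.mp heMN).1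
    exact hbM ⟨e, heM, hbe⟩
  | succ k ih =>
    intro M N b hM hMc hN hNc hbM hbN hk
    obtain ⟨c, hcb, hbc⟩ := GEaux.exists_partner hN hbN
    have hGbc : G.Adj b c := G.mem_edgeSet.mp (hN.1 _ hbc)
    by_cases hcM : Saturates M c
    swap
    · exact (GEaux.no_augment hM hMc hGbc hbM hcM).elim
    obtain ⟨d, hdc, hcd⟩ := GEaux.exists_partner hM hcM
    have hGcd : G.Adj c d := G.mem_edgeSet.mp (hM.1 _ hcd)
    have hdb : d ≠ b := by
      rintro rfl
      exact hbM ⟨_, hcd, by simp⟩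
    have hcbN : s(c,b) ∈ N := by rw [Sym2.eq_swap]; exact hbc
    have hcdN : s(c,d) ∉ N := fun hmem => hdb (GEaux.partner_unique hN hmem hcbN)
    have hbcM : s(b,c) ∉ M := fun hmem => hbM ⟨_, hmem, by simp⟩
    obtain ⟨hM1m, hM1c, hM1d, hM1pres⟩ := GEaux.swap hM hGbc hbM hcd
    have hint : insert s(b,c) (M.erase s(c,d)) ∩ N = insert s(b,c) (M ∩ N) := by
      ext e
      simp only [Finset.mem_inter, Finset.mem_insert, Finset.mem_erase]
      constructor
      · rintro ⟨rfl | ⟨hne, heM⟩, heN⟩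
        · exact Or.inl rfl
        · exact Or.inr ⟨heM, heN⟩
      · rintro (rfl | ⟨heM, heN⟩)
        · exact ⟨Or.inl rfl, hbc⟩
        · exact ⟨Or.inr ⟨fun hh => hcdN (hh ▸ heN), heM⟩, heN⟩
    have hbcMN : s(b,c) ∉ M ∩ N := fun hmem => hbcM (Finset.mem_inter.mp hmem).1
    have hintcard : (insert s(b,c) (M.erase s(c,d)) ∩ N).card = (M ∩ N).card + 1 := by
      rw [hint, Finset.card_insert_of_notMem hbcMN]
    by_cases hdN : Saturates N d
    · -- recurse
      obtain ⟨y, hyM1, hyN, ⟨M', hM'm, hM'c, hM'y, hM'pres⟩, ⟨N', hN'm, hN'c, hN'pres, hN'card⟩⟩ :=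
        ih (insert s(b,c) (M.erase s(c,d))) N d hM1m (hM1c.trans hMc) hN hNc hM1d hdN
          (by omega)
      refine ⟨y, ?_, hyN, ⟨M', hM'm, hM'c, hM'y, ?_⟩, ⟨N', hN'm, hN'c, hN'pres, ?_⟩⟩
      · obtain ⟨e, heM1, hye⟩ := hyM1
        rcases Finset.mem_insert.mp heM1 with rfl | heM
        · rcases Sym2.mem_iff.mp hye with rfl | rfl
          · exact absurd hbN hyN
          · exact hcM
        · exact ⟨e, Finset.mem_of_mem_erase heM, hye⟩
      · intro v hv hvb
        have hvd : v ≠ d := by rintro rfl; exact hv ⟨_, hcd, by simp⟩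
        exact hM'pres v (hM1pres v hv hvb) hvd
      · have h3 : (insert s(b,c) (M.erase s(c,d)) ∩ N').card ≤ (M ∩ N').card + 1 := by
          have hsub : insert s(b,c) (M.erase s(c,d)) ∩ N' ⊆ insert s(b,c) (M ∩ N') := by
            intro e he
            rcases Finset.mem_inter.mp he with ⟨he1, he2⟩
            rcases Finset.mem_insert.mp he1 with rfl | heM
            · exact Finset.mem_insert_self _ _
            · exact Finset.mem_insert_of_mem
                (Finset.mem_inter.mpr ⟨Finset.mem_of_mem_erase heM, he2⟩)
          calc (insert s(b,c) (M.erase s(c,d)) ∩ N').card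
              ≤ (insert s(b,c) (M ∩ N')).card := Finset.card_le_card hsub
            _ ≤ (M ∩ N').card + 1 := Finset.card_insert_le _ _
        omega
    · -- terminal case: y = d
      obtain ⟨hN1m, hN1c, hN1b, hN1pres⟩ := GEaux.swap hN hGcd.symm hdN hcbN
      refine ⟨d, ⟨_, hcd, by simp⟩, hdN,
        ⟨insert s(b,c) (M.erase s(c,d)), hM1m, hM1c.trans hMc, hM1d, hM1pres⟩,
        ⟨insert s(d,c) (N.erase s(c,b)), hN1m, hN1c.trans hNc, hN1pres, ?_⟩⟩
      have hsub : insert s(c,d) (M ∩ N) ⊆ M ∩ (insert s(d,c) (N.erase s(c,b))) := by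
        intro e he
        rcases Finset.mem_insert.mp he with rfl | heMN
        · refine Finset.mem_inter.mpr ⟨hcd, ?_⟩
          rw [Sym2.eq_swap]
          exact Finset.mem_insert_self _ _
        · rcases Finset.mem_inter.mp heMN with ⟨heM, heN⟩
          refine Finset.mem_inter.mpr ⟨heM, Finset.mem_insert_of_mem ?_⟩
          refine Finset.mem_erase.mpr ⟨?_, heN⟩
          rintro rfl
          exact hbcM (by rwa [Sym2.eq_swap] at heM)
      have hcdMN : s(c,d) ∉ M ∩ N := fun hmem => hcdN (Finset.mem_inter.mp hmem).2
      have := Finset.card_le_card hsub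
      rw [Finset.card_insert_of_notMem hcdMN] at this
      omega

lemma GEaux.exists_extremal (M : Finset (Sym2 V)) {x : V} (hx : x ∈ OSet G) :
    ∃ N, IsMatchingSet G N ∧ N.card = MMnum G ∧ ¬ Saturates N x ∧
      ∀ N', IsMatchingSet G N' → N'.card = MMnum G → ¬ Saturates N' x →
        (M ∩ N').card ≤ (M ∩ N).card := by
  set s : Set ℕ :=
    {m | ∃ N, (IsMatchingSet G N ∧ N.card = MMnum G ∧ ¬ Saturates N x) ∧ (M ∩ N).card = m}
    with hs
  obtain ⟨N0, hN01, hN02, hN03⟩ := hx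
  have hne : s.Nonempty := ⟨_, N0, ⟨hN01, hN02, hN03⟩, rfl⟩
  have hbdd : BddAbove s := by
    refine ⟨M.card, ?_⟩
    rintro m ⟨N, _, rfl⟩
    exact Finset.card_le_card Finset.inter_subset_left
  obtain ⟨N, hNprops, hNcard⟩ := Nat.sSup_mem hne hbdd
  exact ⟨N, hNprops.1, hNprops.2.1, hNprops.2.2,
    fun N' h1 h2 h3 => hNcard ▸ le_csSup hbdd ⟨N', ⟨h1, h2, h3⟩, rfl⟩⟩

/-- The graph on `V` whose edges are the edges of `G` inside `O(G)`. -/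
def GEaux.OGraph (G : SimpleGraph V) : SimpleGraph V where
  Adj a b := a ∈ OSet G ∧ b ∈ OSet G ∧ G.Adj a b
  symm := ⟨by rintro a b ⟨ha, hb, hab⟩; exact ⟨hb, ha, hab.symm⟩⟩
  loopless := ⟨by rintro a ⟨_, _, hab⟩; exact hab.ne rfl⟩

lemma GEaux.gallai (n : ℕ) : ∀ (a b : V) (p : (GEaux.OGraph G).Walk a b), p.length ≤ n →
    a ≠ b → ∀ M : Finset (Sym2 V), IsMatchingSet G M → M.card = MMnum G →
    ¬ Saturates M a → ¬ Saturates M b → False := by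
  induction n with
  | zero =>
    intro a b p hp hab M _ _ _ _
    exact hab (SimpleGraph.Walk.eq_of_length_eq_zero (Nat.le_zero.mp hp))
  | succ n ih =>
    intro a b p hp hab M hM hMc haM hbM
    cases p with
    | nil => exact hab rfl
    | @cons _ x _ h q =>
      have hGax : G.Adj a x := h.2.2
      have hxO : x ∈ OSet G := h.2.1
      have hql : q.length ≤ n := by
        rw [SimpleGraph.Walk.length_cons] at hp
        omega
      by_cases hxb : x = b
      · subst hxb
        exact GEaux.no_augment hM hMc hGax haM hbM
      · have hq1 : 1 ≤ q.length :=
          Nat.one_le_iff_ne_zero.mpr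
            (fun h0 => hxb (SimpleGraph.Walk.eq_of_length_eq_zero h0))
        obtain ⟨N, hNm, hNc, hNx, hNmax⟩ := GEaux.exists_extremal M hxO
        have hNb : Saturates N b := by
          by_contra hNb
          exact ih x b q hql hxb N hNm hNc hNx hNb
        have hNa : Saturates N a := by
          by_contra hNa
          exact ih x a (SimpleGraph.Walk.cons h.symm SimpleGraph.Walk.nil)
            (by simpa using by omega) hGax.ne' N hNm hNc hNx hNa
        obtain ⟨y, hyM, hyN, ⟨M', hM'm, hM'c, hM'y, hM'pres⟩,
            ⟨N', hN'm, hN'c, hN'pres, hN'card⟩⟩ :=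
          GEaux.exchange (MMnum G) M N b hM hMc hNm hNc hbM hNb (by omega)
        by_cases hyx : y = x
        · subst hyx
          exact GEaux.no_augment hM'm hM'c hGax (hM'pres a haM hab) hM'y
        · have := hNmax N' hN'm hN'c (hN'pres x hNx (Ne.symm hyx))
          omega

lemma GEaux.induce_edge_iff {S : Set V} (e : Sym2 ↥S) :
    e ∈ (G.induce S).edgeSet ↔ Sym2.map (Subtype.val) e ∈ G.edgeSet := by
  induction e using Sym2.ind with
  | _ a b => simp [Sym2.map_pair_eq, SimpleGraph.mem_edgeSet]

lemma GEaux.image_matching {S : Set V} {M' : Finset (Sym2 ↥S)}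
    (h : IsMatchingSet (G.induce S) M') :
    IsMatchingSet G (M'.image (Sym2.map (Subtype.val))) ∧
    (M'.image (Sym2.map (Subtype.val))).card = M'.card ∧
    (∀ z : ↥S, ¬ Saturates M' z → ¬ Saturates (M'.image (Sym2.map (Subtype.val))) z.val) ∧
    (∀ u : V, u ∉ S → ¬ Saturates (M'.image (Sym2.map (Subtype.val))) u) := by
  refine ⟨⟨?_, ?_⟩, ?_, ?_, ?_⟩
  · intro e he
    obtain ⟨e', he', rfl⟩ := Finset.mem_image.mp he
    exact (GEaux.induce_edge_iff e').mp (h.1 _ he')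
  · intro e he f hf hef u hu huf
    obtain ⟨e', he', rfl⟩ := Finset.mem_image.mp he
    obtain ⟨f', hf', rfl⟩ := Finset.mem_image.mp hf
    have hef' : e' ≠ f' := fun hh => hef (by rw [hh])
    obtain ⟨t, ht, hte⟩ := Sym2.mem_map.mp hu
    obtain ⟨t2, ht2, ht2e⟩ := Sym2.mem_map.mp huf
    have : t2 = t := Subtype.coe_injective (by show (t2 : V) = (t : V); rw [hte, ht2e])
    subst this
    exact h.2 e' he' f' hf' hef' t2 ht ht2
  · exact Finset.card_image_of_injective _ (Sym2.map.injective Subtype.coe_injective)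
  · rintro z hz ⟨e, he, hze⟩
    obtain ⟨e', he', rfl⟩ := Finset.mem_image.mp he
    obtain ⟨t, ht, hte⟩ := Sym2.mem_map.mp hze
    have : t = z := Subtype.coe_injective hte
    subst this
    exact hz ⟨e', he', ht⟩
  · rintro u hu ⟨e, he, hue⟩
    obtain ⟨e', he', rfl⟩ := Finset.mem_image.mp he
    obtain ⟨t, ht, hte⟩ := Sym2.mem_map.mp hue
    exact hu (hte ▸ t.2)

lemma GEaux.mmnum_induce {o : V} (ho : o ∈ OSet G) :
    MMnum (G.induce ({o}ᶜ : Set V)) = MMnum G := by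
  apply le_antisymm
  · have hne : {n : ℕ | ∃ M' : Finset (Sym2 ↥({o}ᶜ : Set V)),
        IsMatchingSet (G.induce ({o}ᶜ : Set V)) M' ∧ M'.card = n}.Nonempty :=
      ⟨0, ∅, ⟨by simp, by simp⟩, by simp⟩
    apply csSup_le hne
    rintro n ⟨M', hM', rfl⟩
    obtain ⟨h1, h2, _⟩ := GEaux.image_matching hM'
    calc M'.card = (M'.image (Sym2.map (Subtype.val))).card := h2.symm
      _ ≤ MMnum G := (GEaux.mmnum_spec G).2 _ h1
  · obtain ⟨M₀, hM₀m, hM₀c, hM₀o⟩ := ho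
    classical
    set M' : Finset (Sym2 ↥({o}ᶜ : Set V)) :=
      Finset.univ.filter (fun e => Sym2.map (Subtype.val) e ∈ M₀) with hM'def
    have himg : M'.image (Sym2.map (Subtype.val)) = M₀ := by
      apply Finset.Subset.antisymm
      · intro e he
        obtain ⟨e', he', rfl⟩ := Finset.mem_image.mp he
        exact (Finset.mem_filter.mp he').2
      · intro e he
        induction e using Sym2.ind with
        | _ u w =>
          have hu : u ≠ o := fun hh => hM₀o ⟨_, he, by simp [hh]⟩
          have hw : w ≠ o := fun hh => hM₀o ⟨_, he, by simp [hh]⟩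
          refine Finset.mem_image.mpr
            ⟨s((⟨u, Set.mem_compl_singleton_iff.mpr hu⟩ : ↥({o}ᶜ : Set V)),
              (⟨w, Set.mem_compl_singleton_iff.mpr hw⟩ : ↥({o}ᶜ : Set V))), ?_,
              by simp [Sym2.map_pair_eq]⟩
          refine Finset.mem_filter.mpr ⟨Finset.mem_univ _, ?_⟩
          simpa [Sym2.map_pair_eq] using he
    have hmatch : IsMatchingSet (G.induce ({o}ᶜ : Set V)) M' := by
      constructor
      · intro e he
        rw [GEaux.induce_edge_iff e]
        exact hM₀m.1 _ (Finset.mem_filter.mp he).2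
      · intro e he f hf hef t ht htf
        have heM : Sym2.map (Subtype.val) e ∈ M₀ := (Finset.mem_filter.mp he).2
        have hfM : Sym2.map (Subtype.val) f ∈ M₀ := (Finset.mem_filter.mp hf).2
        have hef' : Sym2.map (Subtype.val) e ≠ Sym2.map (Subtype.val) f :=
          fun hh => hef (Sym2.map.injective Subtype.coe_injective hh)
        exact hM₀m.2 _ heM _ hfM hef' t.val (Sym2.mem_map.mpr ⟨t, ht, rfl⟩)
          (Sym2.mem_map.mpr ⟨t, htf, rfl⟩)
    have hcard : M'.card = M₀.card := by
      rw [← himg]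
      exact (Finset.card_image_of_injective _ (Sym2.map.injective Subtype.coe_injective)).symm
    have hle := (GEaux.mmnum_spec (G.induce ({o}ᶜ : Set V))).2 _ hmatch
    omega

lemma GEaux.olift {o : V} (ho : o ∈ OSet G) {z : ↥({o}ᶜ : Set V)}
    (hz : z ∈ OSet (G.induce ({o}ᶜ : Set V))) :
    ∃ Mz : Finset (Sym2 V), IsMatchingSet G Mz ∧ Mz.card = MMnum G ∧
      ¬ Saturates Mz o ∧ ¬ Saturates Mz z.val := by
  obtain ⟨N', hN'm, hN'c, hN'z⟩ := hz
  obtain ⟨h1, h2, h3, h4⟩ := GEaux.image_matching hN'm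
  refine ⟨N'.image (Sym2.map Subtype.val), h1, ?_, ?_, h3 z hN'z⟩
  · rw [h2, hN'c, GEaux.mmnum_induce ho]
  · exact h4 o (by simp)

end GEaux

/-- If `surplus(G) ≥ 2`, `I(G) ∪ P(G)` is independent, and `o, v ∈ O(G)` are
adjacent, then `G' = G − {o}` has an edge inside `P(G')`. -/
theorem edge_in_P_after_deleting_O_vertex {V : Type} [Fintype V] (G : SimpleGraph V)
    (hsur : SurplusGE G 2) (hI : IndepSet G (ISet G ∪ GEPSet G))
    (o v : V) (ho : o ∈ OSet G) (hv : v ∈ OSet G) (hadj : G.Adj o v) :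
    ∃ a b : ({o}ᶜ : Set V),
      a ∈ GEPSet (G.induce ({o}ᶜ : Set V)) ∧ b ∈ GEPSet (G.induce ({o}ᶜ : Set V)) ∧
        (G.induce ({o}ᶜ : Set V)).Adj a b := by
  classical
  obtain ⟨M₀, hM₀m, hM₀c, hM₀o⟩ := id ho
  have hvo : v ≠ o := hadj.ne'
  have hGov : G.Adj o v := hadj
  have hvM : Saturates M₀ v := by
    by_contra hvM
    exact GEaux.no_augment hM₀m hM₀c hGov hM₀o hvM
  obtain ⟨w, hwv, hvw⟩ := GEaux.exists_partner hM₀m hvM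
  have hGvw : G.Adj v w := G.mem_edgeSet.mp (hM₀m.1 _ hvw)
  have hwo : w ≠ o := by
    rintro rfl
    exact hM₀o ⟨_, hvw, by simp⟩
  obtain ⟨hswm, hswc, hswz, _⟩ := GEaux.swap hM₀m hGov hM₀o hvw
  have hwO : w ∈ OSet G := ⟨_, hswm, hswc.trans hM₀c, hswz⟩
  -- no maximum matching of G misses both o and a vertex connected to o in OGraph
  have key : ∀ (u : V) (p : (GEaux.OGraph G).Walk o u), u ≠ o →
      ∀ Mz : Finset (Sym2 V), IsMatchingSet G Mz → Mz.card = MMnum G →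
      ¬ Saturates Mz o → ¬ Saturates Mz u → False := by
    intro u p hu Mz h1 h2 h3 h4
    exact GEaux.gallai p.length o u p le_rfl (Ne.symm hu) Mz h1 h2 h3 h4
  have hov : (GEaux.OGraph G).Adj o v := ⟨ho, hv, hGov⟩
  have hvwO : (GEaux.OGraph G).Adj v w := ⟨hv, hwO, hGvw⟩
  -- walks from o to v and to w
  let pv : (GEaux.OGraph G).Walk o v := SimpleGraph.Walk.cons hov SimpleGraph.Walk.nil
  let pw : (GEaux.OGraph G).Walk o w :=
    SimpleGraph.Walk.cons hov (SimpleGraph.Walk.cons hvwO SimpleGraph.Walk.nil)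
  set S : Set V := ({o}ᶜ : Set V) with hSdef
  let a' : ↥S := ⟨v, Set.mem_compl_singleton_iff.mpr hvo⟩
  let b' : ↥S := ⟨w, Set.mem_compl_singleton_iff.mpr hwo⟩
  have hnotO : ∀ (u : ↥S) (pu : (GEaux.OGraph G).Walk o u.val),
      u ∉ OSet (G.induce S) := by
    intro u pu huO
    obtain ⟨Mz, h1, h2, h3, h4⟩ := GEaux.olift ho huO
    exact key u.val pu (Set.mem_compl_singleton_iff.mp u.2) Mz h1 h2 h3 h4
  have hmemP : ∀ (u : ↥S) (pu : (GEaux.OGraph G).Walk o u.val),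
      u.val ∈ OSet G →
      (∀ (z : ↥S), z ∈ OSet (G.induce S) → (G.induce S).Adj z u →
        (GEaux.OGraph G).Walk o z.val → False) → u ∈ GEPSet (G.induce S) := by
    intro u pu huOG hz
    simp only [GEPSet, Set.mem_compl_iff, Set.mem_union]
    push_neg
    constructor
    · exact hnotO u pu
    · rintro ⟨hu1, z, hzO, hzadj⟩
      obtain ⟨Mz, h1, h2, h3, h4⟩ := GEaux.olift ho hzO
      have hzOG : z.val ∈ OSet G := ⟨Mz, h1, h2, h4⟩
      have hGzu : G.Adj z.val u.val := hzadj
      -- walk from o to z.val : extend pu by one step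
      have hadj2 : (GEaux.OGraph G).Adj u.val z.val := ⟨huOG, hzOG, hGzu.symm⟩
      exact hz z hzO hzadj (pu.concat hadj2)
  refine ⟨a', b', ?_, ?_, ?_⟩
  · refine hmemP a' pv hv ?_
    intro z hzO hzadj pz
    obtain ⟨Mz, h1, h2, h3, h4⟩ := GEaux.olift ho hzO
    exact key z.val pz (Set.mem_compl_singleton_iff.mp z.2) Mz h1 h2 h3 h4
  · refine hmemP b' pw hwO ?_
    intro z hzO hzadj pz
    obtain ⟨Mz, h1, h2, h3, h4⟩ := GEaux.olift ho hzO
    exact key z.val pz (Set.mem_compl_singleton_iff.mp z.2) Mz h1 h2 h3 h4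
  · exact hGvw
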